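/- Let Σ ∈ ℝ^{m×m} be symmetric positive definite with unit diagonal, let β_i ∈ ℝ^{d_i}, let Φ_i be symmetric positive semidefinite, define S with blocks S_{ij} = β_i Σ_{ij} β_jᵀ + δ_{ij} Φ_i, and assume each S_{ii} is positive definite with β_iᵀ S_{ii}⁻¹ β_i = 1. Let B̄ be any symmetric block matrix with blocks B̄_{ij} ∈ ℝ^{d_i×d_j}, set w_i = S_{ii}⁻¹ β_i, and let Σ̄ ∈ ℝ^{m×m} have entries Σ̄_{ij} = w_iᵀ B̄_{ij} w_j. Then tr(S⁻¹ B̄) = tr(Σ⁻¹ Σ̄) + Σ_{i=1}^m tr((S_{ii}⁻¹ − w_i w_iᵀ) B̄_{ii}). -/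

import Mathlib

open Matrix

set_option linter.unusedVariables false


section VV
variable {k n p : ℕ}

lemma vecMulVec_mul' (v : Fin k → ℝ) (u : Fin n → ℝ) (A : Matrix (Fin n) (Fin p) ℝ) :
    vecMulVec v u * A = vecMulVec v (u ᵥ* A) := by
  ext a b
  simp [mul_apply, vecMulVec_apply, vecMul, dotProduct, Finset.mul_sum, mul_assoc]

lemma mul_vecMulVec' (A : Matrix (Fin k) (Fin n) ℝ) (v : Fin n → ℝ) (u : Fin p → ℝ) :
    A * vecMulVec v u = vecMulVec (A *ᵥ v) u := by
  ext a b
  simp [mul_apply, vecMulVec_apply, mulVec, dotProduct, Finset.sum_mul, mul_assoc]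

lemma vecMul_vecMulVec' (x : Fin k → ℝ) (v : Fin k → ℝ) (u : Fin n → ℝ) :
    x ᵥ* vecMulVec v u = (x ⬝ᵥ v) • u := by
  ext b
  simp [vecMul, vecMulVec_apply, dotProduct, Finset.sum_mul, mul_assoc]

lemma vecMulVec_mulVec' (v : Fin k → ℝ) (u : Fin n → ℝ) (x : Fin n → ℝ) :
    vecMulVec v u *ᵥ x = (u ⬝ᵥ x) • v := by
  ext a
  simp [mulVec, vecMulVec_apply, dotProduct, Finset.mul_sum, mul_assoc, mul_comm, mul_left_comm]

set_option linter.unusedSectionVars false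
section Blk
variable {n : ℕ} (β : Fin n → ℝ) (Φ : Matrix (Fin n) (Fin n) ℝ)
  (hΦs : Φᵀ = Φ) (hT : (vecMulVec β β + Φ).PosDef)
  (hn : β ⬝ᵥ (vecMulVec β β + Φ)⁻¹ *ᵥ β = 1)

include hΦs in
lemma blk_Tsymm : (vecMulVec β β + Φ)ᵀ = vecMulVec β β + Φ := by
  rw [transpose_add, hΦs]
  congr 1
  ext a b
  simp [vecMulVec_apply, mul_comm]

include hT in
lemma blk_TTinv : (vecMulVec β β + Φ) * (vecMulVec β β + Φ)⁻¹ = 1 :=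
  mul_nonsing_inv _ hT.det_pos.ne'.isUnit

include hΦs in
lemma blk_invsymm : ((vecMulVec β β + Φ)⁻¹)ᵀ = (vecMulVec β β + Φ)⁻¹ := by
  rw [transpose_nonsing_inv, blk_Tsymm β Φ hΦs]

include hT in
lemma blk_Tw : (vecMulVec β β + Φ) *ᵥ ((vecMulVec β β + Φ)⁻¹ *ᵥ β) = β := by
  rw [mulVec_mulVec, blk_TTinv β Φ hT, one_mulVec]

include hT hn in
lemma blk_Φw : Φ *ᵥ ((vecMulVec β β + Φ)⁻¹ *ᵥ β) = 0 := by
  have h1 := blk_Tw β Φ hT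
  rw [add_mulVec, vecMulVec_mulVec', hn, one_smul] at h1
  -- β + Φ *ᵥ w = β
  have := add_left_cancel (a := β) (by rw [h1, add_zero] : β + Φ *ᵥ ((vecMulVec β β + Φ)⁻¹ *ᵥ β) = β + 0)
  exact this

include hΦs hn in
lemma blk_wvecMul : β ᵥ* (vecMulVec β β + Φ)⁻¹ = (vecMulVec β β + Φ)⁻¹ *ᵥ β := by
  conv_lhs => rw [← blk_invsymm β Φ hΦs, vecMul_transpose]

include hΦs hn in
lemma blk_βD : β ᵥ* ((vecMulVec β β + Φ)⁻¹
    - vecMulVec ((vecMulVec β β + Φ)⁻¹ *ᵥ β) ((vecMulVec β β + Φ)⁻¹ *ᵥ β)) = 0 := by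
  rw [vecMul_sub, blk_wvecMul β Φ hΦs hn, vecMul_vecMulVec', hn, one_smul, sub_self]

include hΦs hT hn in
lemma blk_ΦD : Φ * ((vecMulVec β β + Φ)⁻¹
    - vecMulVec ((vecMulVec β β + Φ)⁻¹ *ᵥ β) ((vecMulVec β β + Φ)⁻¹ *ᵥ β))
    = 1 - vecMulVec β ((vecMulVec β β + Φ)⁻¹ *ᵥ β) := by
  rw [mul_sub, mul_vecMulVec', blk_Φw β Φ hT hn]
  have hΦeq : Φ = (vecMulVec β β + Φ) - vecMulVec β β := (add_sub_cancel_left _ _).symm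
  rw [show Φ * (vecMulVec β β + Φ)⁻¹
      = ((vecMulVec β β + Φ) - vecMulVec β β) * (vecMulVec β β + Φ)⁻¹ by rw [← hΦeq],
    sub_mul, blk_TTinv β Φ hT, vecMulVec_mul', blk_wvecMul β Φ hΦs hn]
  ext a b
  simp [vecMulVec_apply]

end Blk

noncomputable def wv {n : ℕ} (β : Fin n → ℝ) (Φ : Matrix (Fin n) (Fin n) ℝ) : Fin n → ℝ :=
  (vecMulVec β β + Φ)⁻¹ *ᵥ β

noncomputable def Dm {n : ℕ} (β : Fin n → ℝ) (Φ : Matrix (Fin n) (Fin n) ℝ) :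
    Matrix (Fin n) (Fin n) ℝ :=
  (vecMulVec β β + Φ)⁻¹ - vecMulVec (wv β Φ) (wv β Φ)

section Facts
variable {n : ℕ} (β : Fin n → ℝ) (Φ : Matrix (Fin n) (Fin n) ℝ)
  (hΦs : Φᵀ = Φ) (hT : (vecMulVec β β + Φ).PosDef)
  (hn : β ⬝ᵥ (vecMulVec β β + Φ)⁻¹ *ᵥ β = 1)

include hn in
lemma fact_βw : β ⬝ᵥ wv β Φ = 1 := hn

include hT hn in
lemma fact_Φw : Φ *ᵥ wv β Φ = 0 := blk_Φw β Φ hT hn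

include hΦs hn in
lemma fact_βD : β ᵥ* Dm β Φ = 0 := blk_βD β Φ hΦs hn

include hΦs hT hn in
lemma fact_ΦD : Φ * Dm β Φ = 1 - vecMulVec β (wv β Φ) := blk_ΦD β Φ hΦs hT hn

end Facts

theorem stmt7_aux {m : ℕ} {d : Fin m → ℕ}
    (Sig : Matrix (Fin m) (Fin m) ℝ) (hSig : Sig.PosDef) (hdiag : ∀ i, Sig i i = 1)
    (β : (i : Fin m) → Fin (d i) → ℝ)
    (Φ : (i : Fin m) → Matrix (Fin (d i)) (Fin (d i)) ℝ)
    (hΦs : ∀ i, (Φ i)ᵀ = Φ i)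
    (hSii : ∀ i, (vecMulVec (β i) (β i) + Φ i).PosDef)
    (hnorm : ∀ i, β i ⬝ᵥ (vecMulVec (β i) (β i) + Φ i)⁻¹ *ᵥ β i = 1)
    (B : Matrix ((i : Fin m) × Fin (d i)) ((i : Fin m) × Fin (d i)) ℝ) :
    ((Matrix.of fun p q : (i : Fin m) × Fin (d i) =>
        β p.1 p.2 * Sig p.1 q.1 * β q.1 q.2 +
          (if h : p.1 = q.1 then Φ p.1 p.2 (Fin.cast (congrArg d h.symm) q.2) else 0))⁻¹ * B).trace
      = (Sig⁻¹ * (Matrix.of fun i j =>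
            wv (β i) (Φ i) ⬝ᵥ
              ((Matrix.of fun a b => B ⟨i, a⟩ ⟨j, b⟩ : Matrix (Fin (d i)) (Fin (d j)) ℝ)
                *ᵥ wv (β j) (Φ j)))).trace
        + ∑ i, (Dm (β i) (Φ i)
            * (Matrix.of fun a b => B ⟨i, a⟩ ⟨i, b⟩ : Matrix (Fin (d i)) (Fin (d i)) ℝ)).trace := by
  set S : Matrix ((i : Fin m) × Fin (d i)) ((i : Fin m) × Fin (d i)) ℝ :=
    Matrix.of fun p q =>
      β p.1 p.2 * Sig p.1 q.1 * β q.1 q.2 +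
        (if h : p.1 = q.1 then Φ p.1 p.2 (Fin.cast (congrArg d h.symm) q.2) else 0) with hS
  set M : Matrix ((i : Fin m) × Fin (d i)) ((i : Fin m) × Fin (d i)) ℝ :=
    Matrix.of fun p q =>
      (if h : p.1 = q.1 then Dm (β p.1) (Φ p.1) p.2 (Fin.cast (congrArg d h.symm) q.2) else 0)
        + wv (β p.1) (Φ p.1) p.2 * Sig⁻¹ p.1 q.1 * wv (β q.1) (Φ q.1) q.2 with hM
  have hSS : Sig * Sig⁻¹ = 1 := mul_nonsing_inv _ hSig.det_pos.ne'.isUnit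
  have hSM : S * M = 1 := by
    ext ⟨i, a⟩ ⟨j, b⟩
    rw [mul_apply, ← Finset.univ_sigma_univ, Finset.sum_sigma]
    have inner : ∀ k : Fin m,
        (∑ c : Fin (d k), S ⟨i, a⟩ ⟨k, c⟩ * M ⟨k, c⟩ ⟨j, b⟩)
          = β i a * Sig i k * (Sig⁻¹ k j * wv (β j) (Φ j) b)
            + (if _ : k = i then
                (if h2 : i = j then
                  (1 - vecMulVec (β i) (wv (β i) (Φ i))) a (Fin.cast (congrArg d h2.symm) b)
                else 0)
              else 0) := by
      intro k
      have eβD : ∀ b', ∑ c, β k c * Dm (β k) (Φ k) c b' = 0 := by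
        intro b'
        have := congrFun (fact_βD (β k) (Φ k) (hΦs k) (hnorm k)) b'
        simpa [vecMul, dotProduct] using this
      have eβw : ∑ c, β k c * wv (β k) (Φ k) c = 1 := hnorm k
      have eΦD : ∀ a' b', ∑ c, Φ k a' c * Dm (β k) (Φ k) c b'
          = (1 - vecMulVec (β k) (wv (β k) (Φ k))) a' b' := by
        intro a' b'
        have := congrFun (congrFun (fact_ΦD (β k) (Φ k) (hΦs k) (hSii k) (hnorm k)) a') b'
        simpa [mul_apply] using this
      have eΦw : ∀ a', ∑ c, Φ k a' c * wv (β k) (Φ k) c = 0 := by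
        intro a'
        have := congrFun (fact_Φw (β k) (Φ k) (hSii k) (hnorm k)) a'
        simpa [mulVec, dotProduct] using this
      by_cases hik : k = i
      · subst hik
        simp only [hS, hM, of_apply, dif_pos rfl, dite_true, Fin.cast_eq_self,
          eq_self_iff_true]
        by_cases hkj : k = j
        · subst hkj
          simp only [dif_pos rfl, dite_true, Fin.cast_eq_self, eq_self_iff_true]
          have expand : ∀ c,
              (β k a * Sig k k * β k c + Φ k a c)
                  * (Dm (β k) (Φ k) c b
                      + wv (β k) (Φ k) c * Sig⁻¹ k k * wv (β k) (Φ k) b)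
                = (β k a * Sig k k) * (β k c * Dm (β k) (Φ k) c b)
                  + (β k a * Sig k k * (Sig⁻¹ k k * wv (β k) (Φ k) b))
                      * (β k c * wv (β k) (Φ k) c)
                  + (Φ k a c * Dm (β k) (Φ k) c b)
                  + (Sig⁻¹ k k * wv (β k) (Φ k) b) * (Φ k a c * wv (β k) (Φ k) c) := by
            intro c; ring
          rw [Finset.sum_congr rfl fun c _ => expand c]
          simp only [Finset.sum_add_distrib, ← Finset.mul_sum]
          rw [eβD, eβw, eΦD, eΦw]
          ring
        · simp only [dif_neg hkj]
          have expand : ∀ c,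
              (β k a * Sig k k * β k c + Φ k a c)
                  * (0 + wv (β k) (Φ k) c * Sig⁻¹ k j * wv (β j) (Φ j) b)
                = (β k a * Sig k k * (Sig⁻¹ k j * wv (β j) (Φ j) b))
                      * (β k c * wv (β k) (Φ k) c)
                  + (Sig⁻¹ k j * wv (β j) (Φ j) b) * (Φ k a c * wv (β k) (Φ k) c) := by
            intro c; ring
          rw [Finset.sum_congr rfl fun c _ => expand c]
          simp only [Finset.sum_add_distrib, ← Finset.mul_sum]
          rw [eβw, eΦw]
          ring
      · simp only [hS, hM, of_apply, dif_neg (Ne.symm hik), dif_neg hik, add_zero]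
        by_cases hkj : k = j
        · subst hkj
          simp only [dif_pos rfl, dite_true, Fin.cast_eq_self, eq_self_iff_true]
          have expand : ∀ c,
              (β i a * Sig i k * β k c)
                  * (Dm (β k) (Φ k) c b
                      + wv (β k) (Φ k) c * Sig⁻¹ k k * wv (β k) (Φ k) b)
                = (β i a * Sig i k) * (β k c * Dm (β k) (Φ k) c b)
                  + (β i a * Sig i k * (Sig⁻¹ k k * wv (β k) (Φ k) b))
                      * (β k c * wv (β k) (Φ k) c) := by
            intro c; ring
          rw [Finset.sum_congr rfl fun c _ => expand c]
          simp only [Finset.sum_add_distrib, ← Finset.mul_sum]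
          rw [eβD, eβw]
          ring
        · simp only [dif_neg hkj]
          have expand : ∀ c,
              (β i a * Sig i k * β k c)
                  * (0 + wv (β k) (Φ k) c * Sig⁻¹ k j * wv (β j) (Φ j) b)
                = (β i a * Sig i k * (Sig⁻¹ k j * wv (β j) (Φ j) b))
                      * (β k c * wv (β k) (Φ k) c) := by
            intro c; ring
          rw [Finset.sum_congr rfl fun c _ => expand c]
          rw [← Finset.mul_sum, eβw]
          ring
    rw [Finset.sum_congr rfl fun k _ => inner k, Finset.sum_add_distrib,
      Fintype.sum_dite_eq']
    have hone : ∑ k, β i a * Sig i k * (Sig⁻¹ k j * wv (β j) (Φ j) b)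
        = β i a * (Sig * Sig⁻¹) i j * wv (β j) (Φ j) b := by
      rw [mul_apply]
      simp [Finset.mul_sum, Finset.sum_mul, mul_assoc]
    rw [hone, hSS]
    by_cases hij : i = j
    · subst hij
      simp only [dif_pos rfl, dite_true, Fin.cast_eq_self, eq_self_iff_true,
        one_apply_eq, mul_one, Matrix.sub_apply, vecMulVec_apply, Matrix.one_apply,
        Sigma.mk.inj_iff, heq_eq_eq, true_and]
      rcases eq_or_ne a b with rfl | hab
      · simp
      · simp [hab]
    · have h1 : (1 : Matrix (Fin m) (Fin m) ℝ) i j = 0 := one_apply_ne hij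
      have h2 : (⟨i, a⟩ : (i : Fin m) × Fin (d i)) ≠ ⟨j, b⟩ := by
        intro h; exact hij (congrArg Sigma.fst h)
      simp [h1, dif_neg hij, Matrix.one_apply, h2]
  have hSinv : S⁻¹ = M := inv_eq_right_inv hSM
  rw [hSinv]
  have tA : ∀ (i : Fin m) (a : Fin (d i)), (∑ k, ∑ c : Fin (d k),
      (if h : i = k then Dm (β i) (Φ i) a (Fin.cast (congrArg d h.symm) c) else 0)
        * B ⟨k, c⟩ ⟨i, a⟩)
      = ∑ c, Dm (β i) (Φ i) a c * B ⟨i, c⟩ ⟨i, a⟩ := by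
    intro i a
    have step : ∀ k, (∑ c : Fin (d k),
        (if h : i = k then Dm (β i) (Φ i) a (Fin.cast (congrArg d h.symm) c) else 0)
          * B ⟨k, c⟩ ⟨i, a⟩)
        = (if h : i = k then
            ∑ c : Fin (d k), Dm (β i) (Φ i) a (Fin.cast (congrArg d h.symm) c) * B ⟨k, c⟩ ⟨i, a⟩
          else 0) := by
      intro k
      by_cases h : i = k
      · subst h; simp
      · simp [h]
    rw [Finset.sum_congr rfl fun k _ => step k, Fintype.sum_dite_eq]
    simp
  have expandM : (M * B).trace
      = (∑ i, ∑ a, ∑ k, ∑ c : Fin (d k),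
          (if h : i = k then Dm (β i) (Φ i) a (Fin.cast (congrArg d h.symm) c) else 0)
            * B ⟨k, c⟩ ⟨i, a⟩)
        + ∑ i, ∑ a, ∑ k, ∑ c : Fin (d k),
            wv (β i) (Φ i) a * Sig⁻¹ i k * wv (β k) (Φ k) c * B ⟨k, c⟩ ⟨i, a⟩ := by
    have t0 : (M * B).trace = ∑ i, ∑ a, ∑ k, ∑ c : Fin (d k),
        M ⟨i, a⟩ ⟨k, c⟩ * B ⟨k, c⟩ ⟨i, a⟩ := by
      rw [Matrix.trace, ← Finset.univ_sigma_univ, Finset.sum_sigma]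
      refine Finset.sum_congr rfl fun i _ => Finset.sum_congr rfl fun a _ => ?_
      rw [Matrix.diag_apply, mul_apply, ← Finset.univ_sigma_univ, Finset.sum_sigma]
    rw [t0]
    simp only [hM, of_apply, add_mul, Finset.sum_add_distrib]
  have rhs2 : ∀ i : Fin m, (Dm (β i) (Φ i)
        * (Matrix.of fun a b => B ⟨i, a⟩ ⟨i, b⟩ : Matrix (Fin (d i)) (Fin (d i)) ℝ)).trace
      = ∑ a, ∑ c, Dm (β i) (Φ i) a c * B ⟨i, c⟩ ⟨i, a⟩ := by
    intro i
    rw [Matrix.trace]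
    refine Finset.sum_congr rfl fun a _ => ?_
    rw [Matrix.diag_apply, mul_apply]
    simp
  have rhs1 : (Sig⁻¹ * (Matrix.of fun i j =>
        wv (β i) (Φ i) ⬝ᵥ
          ((Matrix.of fun a b => B ⟨i, a⟩ ⟨j, b⟩ : Matrix (Fin (d i)) (Fin (d j)) ℝ)
            *ᵥ wv (β j) (Φ j)))).trace
      = ∑ i, ∑ a, ∑ k, ∑ c : Fin (d k),
          wv (β i) (Φ i) a * Sig⁻¹ i k * wv (β k) (Φ k) c * B ⟨k, c⟩ ⟨i, a⟩ := by
    rw [Matrix.trace]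
    have swap1 : ∀ i : Fin m, (∑ a : Fin (d i), ∑ k, ∑ c : Fin (d k),
        wv (β i) (Φ i) a * Sig⁻¹ i k * wv (β k) (Φ k) c * B ⟨k, c⟩ ⟨i, a⟩)
        = ∑ k, ∑ a : Fin (d i), ∑ c : Fin (d k),
            wv (β i) (Φ i) a * Sig⁻¹ i k * wv (β k) (Φ k) c * B ⟨k, c⟩ ⟨i, a⟩ :=
      fun i => Finset.sum_comm
    refine Finset.sum_congr rfl fun i _ => ?_
    rw [Matrix.diag_apply, mul_apply, swap1]
    refine Finset.sum_congr rfl fun k _ => ?_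
    rw [Finset.sum_comm]
    simp only [of_apply, dotProduct, mulVec, Finset.mul_sum, Finset.sum_mul]
    refine Finset.sum_congr rfl fun c _ => ?_
    refine Finset.sum_congr rfl fun a _ => ?_
    ring
  rw [expandM, rhs1, add_comm]
  congr 1
  refine Finset.sum_congr rfl fun i _ => ?_
  rw [rhs2 i]
  refine Finset.sum_congr rfl fun a _ => ?_
  exact tA i a


theorem stmt7 {m : ℕ} {d : Fin m → ℕ}
    (Sig : Matrix (Fin m) (Fin m) ℝ) (hSig : Sig.PosDef) (hdiag : ∀ i, Sig i i = 1)
    (β : (i : Fin m) → Fin (d i) → ℝ)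
    (Φ : (i : Fin m) → Matrix (Fin (d i)) (Fin (d i)) ℝ)
    (hΦ : ∀ i, (Φ i).PosSemidef)
    (hSii : ∀ i, (vecMulVec (β i) (β i) + Φ i).PosDef)
    (hnorm : ∀ i, β i ⬝ᵥ (vecMulVec (β i) (β i) + Φ i)⁻¹ *ᵥ β i = 1)
    (B : Matrix ((i : Fin m) × Fin (d i)) ((i : Fin m) × Fin (d i)) ℝ)
    (hB : Bᵀ = B) :
    let S : Matrix ((i : Fin m) × Fin (d i)) ((i : Fin m) × Fin (d i)) ℝ :=
      Matrix.of fun p q =>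
        β p.1 p.2 * Sig p.1 q.1 * β q.1 q.2 +
          (if h : p.1 = q.1 then Φ p.1 p.2 (Fin.cast (congrArg d h.symm) q.2) else 0)
    let w : (i : Fin m) → Fin (d i) → ℝ :=
      fun i => (vecMulVec (β i) (β i) + Φ i)⁻¹ *ᵥ β i
    let Bblk : (i : Fin m) → (j : Fin m) → Matrix (Fin (d i)) (Fin (d j)) ℝ :=
      fun i j => Matrix.of fun a b => B ⟨i, a⟩ ⟨j, b⟩
    let Sbar : Matrix (Fin m) (Fin m) ℝ :=
      Matrix.of fun i j => w i ⬝ᵥ (Bblk i j) *ᵥ w j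
    (S⁻¹ * B).trace
      = (Sig⁻¹ * Sbar).trace
        + ∑ i, (((vecMulVec (β i) (β i) + Φ i)⁻¹ - vecMulVec (w i) (w i)) * Bblk i i).trace := by
  intro S w Bblk Sbar
  have hΦs : ∀ i, (Φ i)ᵀ = Φ i := fun i => (hΦ i).1
  exact stmt7_aux Sig hSig hdiag β Φ hΦs hSii hnorm B
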